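/- Let N ≥ 1 and let h : ℚ^N → ℚ be a function of finite functional degree (i.e., fdeg(h) ≤ d for some d ∈ ℕ, with respect to the additive group structures). If h(x) = 0 for every x ∈ ℤ^N ⊆ ℚ^N, then h = 0. -/

import Mathlib

/-- The difference operator `Δ_a` sending `f` to `x ↦ f (x + a) - f x`. -/
def disc {A B : Type*} [AddCommGroup A] [AddCommGroup B] (a : A) (f : A → B) : A → B :=
  fun x => f (x + a) - f x

/-- Iterated difference operator `Δ_{a_1} ⋯ Δ_{a_k} f` along a list `[a_1, …, a_k]`. -/
def multiDisc {A B : Type*} [AddCommGroup A] [AddCommGroup B] : List A → (A → B) → (A → B)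
  | [], f => f
  | a :: l, f => disc a (multiDisc l f)

/-- `FdegLE f d` says that the functional degree of `f` is at most `d`, i.e. all
`(d+1)`-fold iterated differences of `f` vanish. -/
def FdegLE {A B : Type*} [AddCommGroup A] [AddCommGroup B] (f : A → B) (d : ℕ) : Prop :=
  ∀ l : List A, l.length = d + 1 → multiDisc l f = 0

lemma disc_comm (a b : ℤ) (f : ℤ → ℚ) : disc a (disc b f) = disc b (disc a f) := by
  funext n
  simp only [disc]
  rw [add_right_comm]
  ring

lemma disc_zero (a : ℤ) : disc a (0 : ℤ → ℚ) = 0 := by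
  funext n; simp [disc]

lemma disc_iterate_comm (m : ℤ) (k : ℕ) (g : ℤ → ℚ) :
    (disc (1:ℤ))^[k] (disc m g) = disc m ((disc (1:ℤ))^[k] g) := by
  induction k with
  | zero => rfl
  | succ k ih =>
      rw [Function.iterate_succ_apply', ih, Function.iterate_succ_apply', disc_comm]

lemma L1 (f : ℤ → ℚ) (hf : disc (1:ℤ) f = 0) : ∀ n : ℤ, f n = f 0 := by
  have h : ∀ n : ℤ, f (n + 1) = f n := by
    intro n
    have := congrFun hf n
    simp only [disc, Pi.zero_apply, sub_eq_zero] at this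
    exact this
  intro n
  induction n using Int.induction_on with
  | zero => rfl
  | succ k ih => rw [h (k : ℤ), ih]
  | pred k ih =>
      have h2 := h (-(k : ℤ) - 1)
      rw [show (-(k : ℤ) - 1 + 1) = -(k : ℤ) by ring] at h2
      rw [← h2]
      exact ih

lemma L2 (f : ℤ → ℚ) (hf : disc (1:ℤ) (disc (1:ℤ) f) = 0) :
    ∀ n : ℤ, f n = f 0 + n * (f 1 - f 0) := by
  have hc : ∀ n : ℤ, f (n + 1) - f n = f 1 - f 0 := by
    intro n
    have := L1 _ hf n
    simpa [disc] using this
  intro n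
  induction n using Int.induction_on with
  | zero => simp
  | succ k ih =>
      have := hc (k : ℤ)
      push_cast
      push_cast at ih
      linarith
  | pred k ih =>
      have := hc (-(k : ℤ) - 1)
      rw [show (-(k : ℤ) - 1 + 1) = -(k : ℤ) by ring] at this
      push_cast
      push_cast at ih
      linarith

/-- If `Δ_1^{d+1} g = 0` and `Δ_m g = 0` with `m ≠ 0`, then `Δ_1 g = 0`. -/
lemma periodic_const (m : ℤ) (hm : m ≠ 0) :
    ∀ d : ℕ, ∀ g : ℤ → ℚ, (disc (1:ℤ))^[d+1] g = 0 → disc m g = 0 → disc (1:ℤ) g = 0 := by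
  intro d
  induction d with
  | zero => intro g h1 _; simpa using h1
  | succ d ih =>
      intro g h1 h2
      have h1' : (disc (1:ℤ))^[d+1] (disc (1:ℤ) g) = 0 := by
        rw [← Function.iterate_succ_apply]; exact h1
      have h2' : disc m (disc (1:ℤ) g) = 0 := by
        rw [disc_comm, h2, disc_zero]
      have h3 := ih (disc (1:ℤ) g) h1' h2'
      have hlin := L2 g h3
      have hgm : g (0 + m) - g 0 = 0 := congrFun h2 0
      have hc : g 1 - g 0 = 0 := by
        have hm' := hlin m
        rw [zero_add] at hgm
        have : (m : ℚ) * (g 1 - g 0) = 0 := by linarith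
        rcases mul_eq_zero.mp this with h | h
        · exact absurd (by exact_mod_cast h) hm
        · exact h
      funext n
      have hn1 := hlin (n + 1)
      have hn := hlin n
      simp only [disc, Pi.zero_apply]
      push_cast at hn1
      linarith

/-- If `Δ_1^{d+1} g = 0` and `g` vanishes on `mℤ` with `m ≠ 0`, then `g = 0`. -/
lemma oneDim (m : ℤ) (hm : m ≠ 0) :
    ∀ d : ℕ, ∀ g : ℤ → ℚ, (disc (1:ℤ))^[d+1] g = 0 → (∀ k : ℤ, g (m * k) = 0) → g = 0 := by
  intro d
  induction d with
  | zero =>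
      intro g h1 h2
      funext n
      have := L1 g (by simpa using h1) n
      rw [this, show (0:ℤ) = m * 0 by ring, h2 0]
      rfl
  | succ d ih =>
      intro g h1 h2
      have hconst : disc (1:ℤ) ((disc (1:ℤ))^[d+1] g) = 0 := by
        rw [← Function.iterate_succ_apply' (disc (1:ℤ)) (d+1) g]; exact h1
      have hCst := L1 _ hconst
      have hdm : disc m ((disc (1:ℤ))^[d+1] g) = 0 := by
        funext n
        simp only [disc, Pi.zero_apply]
        rw [hCst (n + m), hCst n, sub_self]
      have hsw : (disc (1:ℤ))^[d+1] (disc m g) = 0 := by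
        rw [disc_iterate_comm]; exact hdm
      have hvan' : ∀ k : ℤ, (disc m g) (m * k) = 0 := by
        intro k
        simp only [disc]
        rw [show m * k + m = m * (k + 1) by ring, h2 (k + 1), h2 k, sub_self]
      have hzero := ih (disc m g) hsw hvan'
      have hd1 := periodic_const m hm (d + 1) g h1 hzero
      funext n
      have := L1 g hd1 n
      rw [this, show (0:ℤ) = m * 0 by ring, h2 0]
      rfl

lemma multiDisc_replicate {A B : Type*} [AddCommGroup A] [AddCommGroup B]
    (k : ℕ) (a : A) (f : A → B) :
    multiDisc (List.replicate k a) f = (disc a)^[k] f := by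
  induction k with
  | zero => rfl
  | succ k ih =>
      rw [List.replicate_succ, multiDisc, ih]
      exact (Function.iterate_succ_apply' (disc a) k f).symm

/-- If `h : ℚ^N → ℚ` has finite functional degree and vanishes on `ℤ^N`, then `h = 0`. -/
theorem eq_zero_of_finite_fdeg_of_vanishing_on_int
    (N : ℕ) (hN : 1 ≤ N) (h : (Fin N → ℚ) → ℚ)
    (hfin : ∃ d : ℕ, FdegLE h d)
    (hvan : ∀ x : Fin N → ℤ, h (fun i => (x i : ℚ)) = 0) :
    h = 0 := by
  obtain ⟨d, hd⟩ := hfin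
  funext x
  -- common denominator
  set m : ℤ := ∏ i, ((x i).den : ℤ) with hmdef
  have hm0 : m ≠ 0 := by
    rw [hmdef]
    apply Finset.prod_ne_zero_iff.mpr
    intro i _
    exact_mod_cast (x i).den_nz
  have hy : ∀ i, ∃ y : ℤ, (m : ℚ) * x i = (y : ℚ) := by
    intro i
    have hdvd : ((x i).den : ℤ) ∣ m := Finset.dvd_prod_of_mem _ (Finset.mem_univ i)
    obtain ⟨t, ht⟩ := hdvd
    refine ⟨(x i).num * t, ?_⟩
    have hnum : (x i) * ((x i).den : ℚ) = ((x i).num : ℚ) := Rat.mul_den_eq_num (x i)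
    rw [ht]
    push_cast
    linear_combination (t : ℚ) * hnum
  choose y hy' using hy
  set g : ℤ → ℚ := fun n => h (fun i => (n : ℚ) * x i) with hgdef
  have hpull : ∀ k : ℕ,
      (disc (1:ℤ))^[k] g = fun n : ℤ => ((disc x)^[k] h) (fun i => (n : ℚ) * x i) := by
    intro k
    induction k with
    | zero => rfl
    | succ k ih =>
        rw [Function.iterate_succ_apply', ih, Function.iterate_succ_apply']
        funext n
        simp only [disc]
        have harg : (fun i => ((n + 1 : ℤ) : ℚ) * x i) = (fun i => (n : ℚ) * x i) + x := by
          funext i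
          simp only [Pi.add_apply]
          push_cast
          ring
        rw [harg]
  have h1 : (disc (1:ℤ))^[d+1] g = 0 := by
    rw [hpull]
    have hzero : multiDisc (List.replicate (d+1) x) h = 0 :=
      hd _ (by simp)
    rw [multiDisc_replicate] at hzero
    rw [hzero]
    rfl
  have h2 : ∀ k : ℤ, g (m * k) = 0 := by
    intro k
    have harg : (fun i => ((m * k : ℤ) : ℚ) * x i) = fun i => ((k * y i : ℤ) : ℚ) := by
      funext i
      push_cast
      rw [mul_assoc, mul_comm (k:ℚ), ← mul_assoc, hy' i]
      ring
    rw [hgdef]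
    simp only
    rw [harg]
    exact hvan (fun i => k * y i)
  have hg0 := oneDim m hm0 d g h1 h2
  have h3 := congrFun hg0 1
  simpa [hgdef] using h3
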